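/- With a single FRSC of window λ and fraction C, the miner's total per-block reward rewardT_H = ν_{H−1}/λ + M·F_H is a convex combination smoothing of past fees: if all past fees lie in an interval [F_min, F_max] and ν_0 ∈ [C·λ·F_min, C·λ·F_max], then rewardT_H ∈ [F_min, F_max] for all H. -/

import Mathlib

/-- FRSC smoothing: with window `λ ≥ 1`, `C ∈ [0,1]`, `M = 1 − C`, fee sequence
bounded in `[F_min, F_max]`, state update `ν_H = ν_{H−1}·(1 − 1/λ) + C·F_H`, and
initial state `ν_0 ∈ [C·λ·F_min, C·λ·F_max]`, the state stays in that interval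
and the miner's per-block reward `ν_{H−1}/λ + M·F_H` lies in `[F_min, F_max]`. -/
theorem frsc_reward_bounded
    (l C M Fmin Fmax : ℝ) (hl : 1 ≤ l)
    (hC0 : 0 ≤ C) (hC1 : C ≤ 1) (hM : M = 1 - C)
    (F : ℕ → ℝ) (hF : ∀ H, Fmin ≤ F H ∧ F H ≤ Fmax)
    (ν : ℕ → ℝ)
    (hν0 : C * l * Fmin ≤ ν 0 ∧ ν 0 ≤ C * l * Fmax)
    (hrec : ∀ H : ℕ, ν (H + 1) = ν H * (1 - 1 / l) + C * F (H + 1)) :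
    (∀ H : ℕ, C * l * Fmin ≤ ν H ∧ ν H ≤ C * l * Fmax) ∧
    (∀ H : ℕ, Fmin ≤ ν H / l + M * F (H + 1) ∧
      ν H / l + M * F (H + 1) ≤ Fmax) := by
  have hl0 : (0:ℝ) < l := lt_of_lt_of_le one_pos hl
  have hcoef : 0 ≤ 1 - 1 / l := by
    have : 1 / l ≤ 1 := by
      rw [div_le_one hl0]; exact hl
    linarith
  subst hM
  have hinv : l * (1 / l) = 1 := mul_one_div_cancel (ne_of_gt hl0)
  have hstate : ∀ H : ℕ, C * l * Fmin ≤ ν H ∧ ν H ≤ C * l * Fmax := by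
    intro H
    induction H with
    | zero => exact hν0
    | succ n ih =>
      obtain ⟨h1, h2⟩ := ih
      obtain ⟨hf1, hf2⟩ := hF (n + 1)
      rw [hrec n]
      constructor
      · have key : C * l * Fmin * (1 - 1 / l) = C * l * Fmin - C * Fmin := by
          field_simp
        linarith [mul_le_mul_of_nonneg_right h1 hcoef, mul_le_mul_of_nonneg_left hf1 hC0]
      · have key : C * l * Fmax * (1 - 1 / l) = C * l * Fmax - C * Fmax := by
          field_simp
        linarith [mul_le_mul_of_nonneg_right h2 hcoef, mul_le_mul_of_nonneg_left hf2 hC0]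
  refine ⟨hstate, fun H => ?_⟩
  obtain ⟨h1, h2⟩ := hstate H
  obtain ⟨hf1, hf2⟩ := hF (H + 1)
  have e1 : C * Fmin ≤ ν H / l := by
    rw [le_div_iff₀ hl0]; nlinarith
  have e2 : ν H / l ≤ C * Fmax := by
    rw [div_le_iff₀ hl0]; nlinarith
  constructor
  · nlinarith [mul_le_mul_of_nonneg_left hf1 (by linarith : (0:ℝ) ≤ 1 - C)]
  · nlinarith [mul_le_mul_of_nonneg_left hf2 (by linarith : (0:ℝ) ≤ 1 - C)]
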